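/- Let λ ∈ ℂ and Δ ∈ ℂ^{n×n}. Define Δ_J := (Δ - Δᴴ)/(2(1+|λ|²)), Δ_R := -(Δ + Δᴴ)/2, and Δ_E := conj(λ)(Δ - Δᴴ)/(2(1+|λ|²)). If λ is purely imaginary, then Δ_J is skew-Hermitian, Δ_R and Δ_E are Hermitian, Δ_J - Δ_R + λ Δ_E = Δ, and ‖Δ_J‖_F² + ‖Δ_R‖_F² + ‖Δ_E‖_F² = ‖(Δ + Δᴴ)/2‖_F² + (1/(1+|λ|²))·‖(Δ - Δᴴ)/2‖_F². -/

import Mathlib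

open Matrix

/-- Frobenius norm of a matrix. -/
noncomputable def frobNorm {n m : ℕ} (A : Matrix (Fin n) (Fin m) ℂ) : ℝ :=
  Real.sqrt (∑ i, ∑ j, ‖A i j‖ ^ 2)

lemma frobNorm_sq {n m : ℕ} (A : Matrix (Fin n) (Fin m) ℂ) :
    frobNorm A ^ 2 = ∑ i, ∑ j, ‖A i j‖ ^ 2 := by
  apply Real.sq_sqrt
  positivity

lemma frobNorm_smul_sq {n m : ℕ} (s : ℂ) (A : Matrix (Fin n) (Fin m) ℂ) :
    frobNorm (s • A) ^ 2 = ‖s‖ ^ 2 * frobNorm A ^ 2 := by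
  simp only [frobNorm_sq, Matrix.smul_apply, smul_eq_mul, norm_mul, mul_pow,
    Finset.mul_sum]

lemma frobNorm_neg {n m : ℕ} (A : Matrix (Fin n) (Fin m) ℂ) :
    frobNorm (-A) = frobNorm A := by
  simp [frobNorm]

theorem three_term_split {n : ℕ} (lam : ℂ) (Δ : Matrix (Fin n) (Fin n) ℂ)
    (ΔJ ΔR ΔE : Matrix (Fin n) (Fin n) ℂ)
    (hJ : ΔJ = ((2 * (1 + ‖lam‖ ^ 2) : ℂ))⁻¹ • (Δ - Δᴴ))
    (hR : ΔR = -((2 : ℂ)⁻¹ • (Δ + Δᴴ)))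
    (hE : ΔE = ((starRingEnd ℂ) lam / (2 * (1 + ‖lam‖ ^ 2) : ℂ)) • (Δ - Δᴴ))
    (hlam : lam.re = 0) :
    ΔJᴴ = -ΔJ ∧ ΔRᴴ = ΔR ∧ ΔEᴴ = ΔE ∧ ΔJ - ΔR + lam • ΔE = Δ ∧
      frobNorm ΔJ ^ 2 + frobNorm ΔR ^ 2 + frobNorm ΔE ^ 2
        = frobNorm ((2 : ℂ)⁻¹ • (Δ + Δᴴ)) ^ 2
          + (1 / (1 + ‖lam‖ ^ 2)) * frobNorm ((2 : ℂ)⁻¹ • (Δ - Δᴴ)) ^ 2 := by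
  set a : ℝ := ‖lam‖ with ha
  have ha0 : 0 ≤ a := norm_nonneg lam
  have hcR : (0:ℝ) < 1 + a ^ 2 := by positivity
  have hc2 : ((2 * (1 + (a:ℂ) ^ 2)) : ℂ) = ((2 * (1 + a ^ 2) : ℝ) : ℂ) := by push_cast; ring
  have hcne : ((2 * (1 + (a:ℂ) ^ 2)) : ℂ) ≠ 0 := by
    rw [hc2]
    exact_mod_cast (by positivity : (2 * (1 + a ^ 2) : ℝ) ≠ 0)
  have hconj : (starRingEnd ℂ) lam = -lam := by
    apply Complex.ext <;> simp [hlam]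
  have hconjc : (starRingEnd ℂ) ((2 * (1 + (a:ℂ) ^ 2)) : ℂ)⁻¹ = ((2 * (1 + (a:ℂ) ^ 2)) : ℂ)⁻¹ := by
    rw [map_inv₀, hc2, Complex.conj_ofReal]
  have hmc : lam * (starRingEnd ℂ) lam = ((a:ℂ))^2 := by
    rw [Complex.mul_conj]
    norm_cast
    rw [ha, Complex.sq_norm]
  refine ⟨?_, ?_, ?_, ?_, ?_⟩
  · rw [hJ]
    rw [conjTranspose_smul, conjTranspose_sub, conjTranspose_conjTranspose]
    rw [show (star (((2 * (1 + (a:ℂ) ^ 2)) : ℂ)⁻¹) : ℂ) = (starRingEnd ℂ) (((2 * (1 + (a:ℂ) ^ 2)) : ℂ)⁻¹) from rfl]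
    rw [hconjc]
    simp [smul_sub]
  · rw [hR]
    rw [conjTranspose_neg, conjTranspose_smul, conjTranspose_add, conjTranspose_conjTranspose]
    simp [add_comm]
  · rw [hE]
    rw [conjTranspose_smul, conjTranspose_sub, conjTranspose_conjTranspose]
    rw [show (star ((starRingEnd ℂ) lam / (2 * (1 + (a:ℂ) ^ 2))) : ℂ)
        = (starRingEnd ℂ) ((starRingEnd ℂ) lam / (2 * (1 + (a:ℂ) ^ 2))) from rfl]
    rw [map_div₀, hc2, Complex.conj_ofReal, hconj]
    simp only [map_neg, Complex.conj_conj]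
    rw [show Δᴴ - Δ = -(Δ - Δᴴ) by rw [neg_sub]]
    rw [smul_neg, ← neg_smul]
    congr 1
    field_simp
    rw [hconj, neg_div]
  · rw [hJ, hR, hE, sub_neg_eq_add, smul_smul]
    rw [add_right_comm, ← add_smul]
    have key : ((2 * (1 + (a:ℂ) ^ 2)) : ℂ)⁻¹
        + lam * ((starRingEnd ℂ) lam / (2 * (1 + (a:ℂ) ^ 2))) = (2:ℂ)⁻¹ := by
      rw [mul_div_assoc', hmc]
      have h1a : (1 + (a:ℂ) ^ 2) ≠ 0 := by exact_mod_cast hcR.ne'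
      field_simp
    rw [key]
    ext i j
    simp [Matrix.smul_apply, Matrix.sub_apply, Matrix.add_apply]
    ring
  · rw [hJ, hR, hE, frobNorm_neg, div_eq_mul_inv]
    simp only [frobNorm_smul_sq]
    have h1 : ‖((2 * (1 + (a:ℂ) ^ 2)) : ℂ)⁻¹‖ = (2 * (1 + a ^ 2))⁻¹ := by
      rw [hc2, norm_inv, Complex.norm_real, Real.norm_eq_abs, abs_of_pos (by positivity)]
    have h2 : ‖(starRingEnd ℂ) lam * ((2 * (1 + (a:ℂ) ^ 2)) : ℂ)⁻¹‖ = a * (2 * (1 + a ^ 2))⁻¹ := by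
      rw [norm_mul, h1]
      simp [ha]
    have h3 : ‖((2:ℂ))⁻¹‖ = (2:ℝ)⁻¹ := by
      rw [norm_inv]; simp
    rw [h1, h2, h3]
    field_simp
    ring
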